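/- If h is a graph homomorphism from a tree T to an acyclic graph H such that any two edges of T sharing a vertex are mapped to distinct edges of H (e.g., h preserves a proper edge coloring), then h is injective. -/

import Mathlib

open SimpleGraph Walk

/-- A homomorphism from a tree to an acyclic graph that maps edges sharing a vertex to
distinct edges is injective. -/
theorem stmt_13 {V W : Type*} (T : SimpleGraph V) (H : SimpleGraph W)
    (hT : T.IsTree) (hH : H.IsAcyclic) (f : T →g H)
    (hc : ∀ x y z, T.Adj x y → T.Adj y z → x ≠ z → f x ≠ f z) :
    Function.Injective f := by
  classical
  have key : ∀ n {a b : V} (p : T.Walk a b), p.length ≤ n → p.IsPath →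
      (p.map f).IsPath := by
    intro n
    induction n with
    | zero =>
      intro a b p hl _
      have : p.length = 0 := Nat.le_zero.mp hl
      have hab : a = b := Walk.eq_of_length_eq_zero this
      subst hab
      have : p = Walk.nil := by
        cases p with
        | nil => rfl
        | cons h q => simp at this
      subst this
      simp
    | succ n ih =>
      intro a b p hl hp
      cases p with
      | nil => simp
      | cons h q =>
        rename_i c
        rw [Walk.map_cons, Walk.cons_isPath_iff]
        have hq : q.IsPath := hp.of_cons
        have hqa : a ∉ q.support := (Walk.cons_isPath_iff _ _ |>.mp hp).2
        have hql : q.length ≤ n := by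
          simpa [Nat.succ_le_succ_iff] using hl
        refine ⟨ih q hql hq, ?_⟩
        intro hmem
        rw [Walk.support_map, List.mem_map] at hmem
        obtain ⟨v, hv, hva⟩ := hmem
        -- take the prefix of q up to v
        set q1 := q.takeUntil v hv with hq1
        have hq1p : q1.IsPath := hq.takeUntil hv
        have hq1l : q1.length ≤ n := le_trans (Walk.length_takeUntil_le q hv) hql
        have hq1m : (q1.map f).IsPath := ih q1 hq1l hq1p
        -- closed walk in H
    
        have hadj : H.Adj (f a) (f c) := f.map_adj h
        have r : H.Walk (f c) (f a) := (q1.map f).copy rfl hva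
        have hr : ((q1.map f).copy rfl hva).IsPath := by
          simpa using hq1m
        have hedge : s(f a, f c) ∈ ((q1.map f).copy rfl hva).edges := by
          by_contra hne
          exact hH _ ((Walk.cons_isCycle_iff _ hadj).mpr ⟨hr, hne⟩)
        rw [Walk.edges_copy] at hedge
        -- analyze q1
        cases hq1' : q1 with
        | nil =>
          rw [hq1'] at hedge
          simp at hedge
        | cons h2 q2 =>
          rename_i d
          rw [hq1'] at hedge
          rw [Walk.map_cons, Walk.edges_cons, List.mem_cons] at hedge
          rcases hedge with hedge | hedge
          · -- s(f a, f c) = s(f c, f d)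
            have hfa : f a = f d := by
              rw [Sym2.eq_iff] at hedge
              rcases hedge with ⟨h1, _⟩ | ⟨h1, h2'⟩
              · exact absurd h1 hadj.ne
              · exact h1
            have had : a = d := by
              by_contra hne
              exact hc a c d h h2 hne hfa
            subst had
            -- a ∈ q.support
            have : a ∈ q1.support := by
              rw [hq1']
              simp [Walk.support_cons]
            exact hqa (Walk.support_takeUntil_subset q hv this)
          · -- s(f a, f c) ∈ edges of q2.map f ⇒ f c ∈ its support
            have hcsup : f c ∈ (q2.map f).support :=
              Walk.snd_mem_support_of_mem_edges _ hedge
            have : ¬ f c ∈ (q2.map f).support := by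
              have := hq1m
              rw [hq1', Walk.map_cons, Walk.cons_isPath_iff] at this
              exact this.2
            exact this hcsup
  intro a b hab
  obtain ⟨p⟩ := hT.isConnected.preconnected a b
  have hp : p.toPath.1.IsPath := p.toPath.2
  have hmp : (p.toPath.1.map f).IsPath := key _ p.toPath.1 le_rfl hp
  have hnil : (p.toPath.1.map f).copy rfl hab.symm = Walk.nil :=
    Walk.isPath_iff_eq_nil.mp (by rw [Walk.isPath_copy]; exact hmp)
  have hlen : p.toPath.1.length = 0 := by
    have := congrArg Walk.length hnil
    simpa using this
  exact Walk.eq_of_length_eq_zero hlen
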